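/- Let a,b,c,d be integers with gcd(a,b) = 1 = gcd(c,d), η = (1+√(-7))/2, and suppose gcd(N(a+bη), N(c+dη)) = 1 where N(x+yη) = x²+xy+2y². If the product (a+bη)(c+dη) is real or purely imaginary, then each of a+bη and c+dη is real or purely imaginary (equivalently b = 0 or 2a+b = 0, and d = 0 or 2c+d = 0). -/

import Mathlib

private lemma dvd_of_dvd_mul' (a b N A : ℤ) (h : Int.gcd a b = 1)
    (h1 : A ∣ a * N) (h2 : A ∣ b * N) : A ∣ N := by
  obtain ⟨u, v, huv⟩ := Int.isCoprime_iff_gcd_eq_one.mpr h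
  have : N = u * (a * N) + v * (b * N) := by linear_combination N * huv.symm
  rw [this]
  exact dvd_add (h1.mul_left u) (h2.mul_left v)

private lemma norm_pos' (a b : ℤ) (h : Int.gcd a b = 1) :
    1 ≤ a^2 + a * b + 2 * b^2 := by
  rcases lt_or_ge 0 (a^2 + a*b + 2*b^2) with h1 | h1
  · omega
  · exfalso
    have hb : b = 0 := by nlinarith [sq_nonneg (2*a+b), sq_nonneg b]
    have ha : a = 0 := by nlinarith [sq_nonneg a]
    rw [ha, hb] at h
    simp at h

private lemma key7 (x y n : ℤ) (h : 4 * n = x^2 + 7 * y^2) (hn : n = 1 ∨ n = 7) :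
    y = 0 ∨ x = 0 := by
  rcases hn with rfl | rfl
  · left
    have hy : y^2 = 0 := le_antisymm (by nlinarith [sq_nonneg x]) (sq_nonneg y)
    exact pow_eq_zero_iff (by norm_num) |>.mp hy
  · right
    have h7 : (7:ℤ) ∣ x := by
      have : (7:ℤ) ∣ x^2 := ⟨4 - y^2, by linarith⟩
      exact Int.Prime.dvd_pow' (by norm_num) this
    obtain ⟨u, rfl⟩ := h7
    have hu : u^2 = 0 := le_antisymm (by nlinarith [sq_nonneg y]) (sq_nonneg u)
    have : u = 0 := pow_eq_zero_iff (by norm_num) |>.mp hu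
    simp [this]

theorem product_real_or_imaginary (a b c d : ℤ)
    (hab : Int.gcd a b = 1) (hcd : Int.gcd c d = 1)
    (hnorm : Int.gcd (a^2 + a * b + 2 * b^2) (c^2 + c * d + 2 * d^2) = 1)
    (hprod : (a * d + b * c + b * d = 0) ∨
      (2 * (a * c - 2 * b * d) + (a * d + b * c + b * d) = 0)) :
    (b = 0 ∨ 2 * a + b = 0) ∧ (d = 0 ∨ 2 * c + d = 0) := by
  set N1 := a^2 + a * b + 2 * b^2 with hN1def
  set N2 := c^2 + c * d + 2 * d^2 with hN2def
  set A := a * c - 2 * b * d with hAdef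
  have hN1pos : 1 ≤ N1 := norm_pos' a b hab
  have hN2pos : 1 ≤ N2 := norm_pos' c d hcd
  -- In each case show A ∣ N1, A ∣ N2, and N1 * N2 = A^2 or 7 * A^2
  have main : N1 * N2 = 1 ∨ N1 * N2 = 7 := by
    rcases hprod with hB | hB
    · -- B = 0
      have hAN2 : A ∣ N2 := by
        apply dvd_of_dvd_mul' a b N2 A hab
        · exact ⟨c + d, by linear_combination (2*d) * hB⟩
        · exact ⟨-d, by linear_combination c * hB⟩
      have hAN1 : A ∣ N1 := by
        apply dvd_of_dvd_mul' c d N1 A hcd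
        · exact ⟨a + b, by linear_combination (2*b) * hB⟩
        · exact ⟨-b, by linear_combination a * hB⟩
      have hA2 : A^2 = 1 := by
        have h1 : A ∣ (1:ℤ) := by
          have := Int.dvd_coe_gcd hAN1 hAN2
          rw [hnorm] at this; exact_mod_cast this
        rcases Int.isUnit_iff.mp (isUnit_of_dvd_one h1) with h | h <;> rw [h] <;> norm_num
      left
      linear_combination hA2 + ((a*c-2*b*d) + 2*(a*d+b*c+b*d)) * hB
    · -- 2A + B = 0
      have hAN2 : A ∣ N2 := by
        apply dvd_of_dvd_mul' a b N2 A hab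
        · exact ⟨c - 3*d, by linear_combination (2*d) * hB⟩
        · exact ⟨-(2*c + d), by linear_combination c * hB⟩
      have hAN1 : A ∣ N1 := by
        apply dvd_of_dvd_mul' c d N1 A hcd
        · exact ⟨a - 3*b, by linear_combination (2*b) * hB⟩
        · exact ⟨-(2*a + b), by linear_combination a * hB⟩
      have hA2 : A^2 = 1 := by
        have h1 : A ∣ (1:ℤ) := by
          have := Int.dvd_coe_gcd hAN1 hAN2
          rw [hnorm] at this; exact_mod_cast this
        rcases Int.isUnit_iff.mp (isUnit_of_dvd_one h1) with h | h <;> rw [h] <;> norm_num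
      right
      linear_combination 7 * hA2 + (2*(a*d+b*c+b*d) - 3*(a*c-2*b*d)) * hB
  -- deduce N1, N2 ∈ {1, 7}
  have hN1d : N1 = 1 ∨ N1 = 7 := by
    rcases main with h | h
    · left; nlinarith
    · have hd : N1 ∣ 7 := ⟨N2, h.symm⟩
      have hle : N1 ≤ 7 := Int.le_of_dvd (by norm_num) hd
      interval_cases N1 <;> omega
  have hN2d : N2 = 1 ∨ N2 = 7 := by
    rcases main with h | h
    · left; nlinarith
    · have hd : N2 ∣ 7 := ⟨N1, by linarith [h, mul_comm N1 N2]⟩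
      have hle : N2 ≤ 7 := Int.le_of_dvd (by norm_num) hd
      interval_cases N2 <;> omega
  constructor
  · exact key7 (2*a + b) b N1 (by rw [hN1def]; ring) hN1d
  · exact key7 (2*c + d) d N2 (by rw [hN2def]; ring) hN2d
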